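/- Let B be a standard Brownian motion, c > 0, and for T > 1 define h_T(t) = max{(ln T)^5, t^{3/4}}. Then P(there exists t ∈ [0,T] with B(t) > c·h_T(t)) ≲ e^{−(ln T)²/4} as T → ∞. -/

import Mathlib

set_option maxHeartbeats 1000000

open MeasureTheory ProbabilityTheory Set Filter
open scoped NNReal ENNReal

lemma gauss_half (v : ℝ≥0) : (1:ℝ≥0∞) ≤ 2 * gaussianReal 0 v {x | 0 ≤ x} := by
  by_cases hv : v = 0
  · subst hv
    rw [gaussianReal_zero_var]
    rw [show {x : ℝ | 0 ≤ x} = Ici 0 from rfl,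
      Measure.dirac_apply_of_mem (mem_Ici.2 le_rfl)]
    norm_num
  · have hmap : (gaussianReal 0 v).map (fun x : ℝ => -1 * x) = gaussianReal 0 v := by
      rw [gaussianReal_map_const_mul (-1 : ℝ)]
      have h1 : (⟨(-1:ℝ)^2, sq_nonneg _⟩ : ℝ≥0) = 1 := by ext; norm_num
      have h2 : (-1 : ℝ) * 0 = 0 := by ring
      rw [h2]; congr 1; ext; simp
    have hneg : gaussianReal 0 v {x | x ≤ 0} = gaussianReal 0 v {x | 0 ≤ x} := by
      conv_rhs => rw [show {x : ℝ | 0 ≤ x} = Ici 0 from rfl, ← hmap]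
      rw [Measure.map_apply (measurable_const_mul (-1)) measurableSet_Ici]
      congr 1
      ext x
      simp [neg_nonneg]
    have huniv : (gaussianReal 0 v) univ = 1 := measure_univ
    have hle : (1:ℝ≥0∞) ≤ gaussianReal 0 v {x | x ≤ 0} + gaussianReal 0 v {x | 0 ≤ x} := by
      rw [← huniv]
      refine le_trans (measure_mono ?_) (measure_union_le _ _)
      intro x _
      rcases le_total x 0 with h | h
      · exact Or.inl h
      · exact Or.inr h
    rw [hneg] at hle
    rwa [two_mul]

lemma gauss_tail (v : ℝ≥0) {a : ℝ} (ha : 0 ≤ a) :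
    gaussianReal 0 v {x | a ≤ x} ≤ ENNReal.ofReal (Real.exp (-a^2 / (2*v))) := by
  by_cases hv : v = 0
  · subst hv
    simp only [NNReal.coe_zero, mul_zero, div_zero, Real.exp_zero, ENNReal.ofReal_one]
    exact prob_le_one
  · have hvpos : (0:ℝ) < v := by positivity
    rw [gaussianReal_apply_eq_integral _ hv]
    apply ENNReal.ofReal_le_ofReal
    have hint1 : IntegrableOn (gaussianPDFReal 0 v) {x | a ≤ x} :=
      (integrable_gaussianPDFReal 0 v).integrableOn
    have hint2 : IntegrableOn (fun x => Real.exp (-a^2/(2*v)) * gaussianPDFReal a v x)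
        {x | a ≤ x} := ((integrable_gaussianPDFReal a v).const_mul _).integrableOn
    calc ∫ x in {x | a ≤ x}, gaussianPDFReal 0 v x
        ≤ ∫ x in {x | a ≤ x}, Real.exp (-a^2/(2*v)) * gaussianPDFReal a v x := by
          refine setIntegral_mono_on hint1 hint2 measurableSet_Ici ?_
          intro x hx
          have hax : a ≤ x := hx
          simp only [gaussianPDFReal, sub_zero]
          rw [mul_left_comm]
          apply mul_le_mul_of_nonneg_left _ (by positivity)
          rw [← Real.exp_add]
          apply Real.exp_le_exp.2
          rw [← add_div, div_le_div_iff_of_pos_right (by positivity)]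
          nlinarith [mul_le_mul_of_nonneg_left hax ha]
      _ ≤ ∫ x, Real.exp (-a^2/(2*v)) * gaussianPDFReal a v x := by
          apply setIntegral_le_integral ((integrable_gaussianPDFReal a v).const_mul _)
          filter_upwards with x
          exact mul_nonneg (Real.exp_nonneg _) (gaussianPDFReal_nonneg _ _ _)
      _ = Real.exp (-a^2/(2*v)) := by
          rw [integral_const_mul, integral_gaussianPDFReal_eq_one a hv, mul_one]

lemma levy_finset {Ω : Type*} [MeasurableSpace Ω] (μ : Measure Ω) [IsProbabilityMeasure μ]
    (B : ℝ → Ω → ℝ)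
    (hB0 : ∀ ω, B 0 ω = 0)
    (hBmeas : ∀ t, Measurable (B t))
    (hBgauss : ∀ s t : ℝ, 0 ≤ s → s ≤ t →
      Measure.map (fun ω => B t ω - B s ω) μ = gaussianReal 0 (Real.toNNReal (t - s)))
    (hBindep : ∀ (n : ℕ) (τ : ℕ → ℝ), Monotone τ → (∀ i, 0 ≤ τ i) →
      iIndepFun
        (fun i : Fin n => fun ω => B (τ (i + 1)) ω - B (τ i) ω) μ)
    (S : ℝ) (hS : 0 ≤ S) (F : Finset ℝ) (hF : ∀ t ∈ F, t ∈ Icc (0:ℝ) S)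
    {a : ℝ} (ha : 0 < a) :
    μ {ω | ∃ t ∈ F, a < B t ω} ≤ 2 * μ {ω | a ≤ B S ω} := by
  classical
  set F' : Finset ℝ := insert 0 (insert S F) with hF'
  have hmemF' : ∀ t ∈ F', 0 ≤ t ∧ t ≤ S := by
    intro t ht
    simp only [hF', Finset.mem_insert] at ht
    rcases ht with rfl | rfl | ht
    · exact ⟨le_rfl, hS⟩
    · exact ⟨hS, le_rfl⟩
    · exact ⟨(hF t ht).1, (hF t ht).2⟩
  set l : List ℝ := F'.sort (· ≤ ·) with hl
  have hsort : l.Pairwise (· ≤ ·) := Finset.pairwise_sort _ _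
  have hmem : ∀ t : ℝ, t ∈ l ↔ t ∈ F' := fun t => Finset.mem_sort _
  set N : ℕ := l.length with hN
  set τ : ℕ → ℝ := fun i => l.getD i S with hτ
  have hτlt : ∀ {i : ℕ} (h : i < N), τ i = l.get ⟨i, h⟩ := by
    intro i h
    simp only [hτ, List.getD_eq_getElem _ _ h, List.get_eq_getElem]
  have hτge : ∀ {i : ℕ}, N ≤ i → τ i = S := by
    intro i h
    simp only [hτ, List.getD_eq_default _ _ h]
  have hbound : ∀ i, 0 ≤ τ i ∧ τ i ≤ S := by
    intro i
    rcases lt_or_ge i N with h | h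
    · rw [hτlt h]
      exact hmemF' _ ((hmem _).1 (l.get_mem _))
    · rw [hτge h]; exact ⟨hS, le_rfl⟩
  have hτnonneg : ∀ i, 0 ≤ τ i := fun i => (hbound i).1
  have hτmono : Monotone τ := by
    intro i j hij
    rcases lt_or_ge j N with hj | hj
    · have hi : i < N := lt_of_le_of_lt hij hj
      rw [hτlt hi, hτlt hj]
      exact hsort.rel_get_of_le (by exact hij)
    · rw [hτge hj]
      exact (hbound i).2
  have hτ0 : τ 0 = 0 := by
    have h0mem : (0:ℝ) ∈ l := (hmem 0).2 (by simp [hF'])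
    obtain ⟨k, hk⟩ := List.get_of_mem h0mem
    have hNpos : 0 < N := lt_of_le_of_lt (Nat.zero_le _) k.2
    have h1 : τ 0 ≤ 0 := by
      rw [hτlt hNpos, ← hk]
      exact hsort.rel_get_of_le (by exact Nat.zero_le _)
    exact le_antisymm h1 (hτnonneg 0)
  have hτN : τ N = S := hτge le_rfl
  -- increments
  set X : ℕ → Ω → ℝ := fun j ω => B (τ (j+1)) ω - B (τ j) ω with hX
  have hsum : ∀ (k : ℕ) (ω : Ω), B (τ k) ω = ∑ j ∈ Finset.range k, X j ω := by
    intro k ω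
    rw [Finset.sum_range_sub (fun j => B (τ j) ω), hτ0, hB0, sub_zero]
  -- first crossing sets
  set A : ℕ → Set Ω := fun i =>
    ((fun ω => B (τ i) ω) ⁻¹' Ioi a) ∩ ⋂ j ∈ Finset.range i, ((fun ω => B (τ j) ω) ⁻¹' Iic a)
    with hA
  set D : ℕ → Set Ω := fun i => (fun ω => B (τ N) ω - B (τ i) ω) ⁻¹' Ici 0 with hD
  have hAmeas : ∀ i, MeasurableSet (A i) := by
    intro i
    exact ((hBmeas _) measurableSet_Ioi).inter
      (Finset.measurableSet_biInter _ fun j _ => (hBmeas _) measurableSet_Iic)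
  have hDmeas : ∀ i, MeasurableSet (D i) :=
    fun i => ((hBmeas _).sub (hBmeas _)) measurableSet_Ici
  have hdisj : ∀ i j, i < j → Disjoint (A i) (A j) := by
    intro i j hij
    rw [Set.disjoint_left]
    intro ω hωi hωj
    have h1 : a < B (τ i) ω := hωi.1
    have h2 : B (τ i) ω ≤ a := by
      have := hωj.2
      simp only [Set.mem_iInter] at this
      exact this i (Finset.mem_range.2 hij)
    exact absurd h1 (not_lt.2 h2)
  have hdisj' : (↑(Finset.range (N+1)) : Set ℕ).PairwiseDisjoint A := by
    intro i _ j _ hij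
    rcases lt_or_gt_of_ne hij with h | h
    · exact hdisj i j h
    · exact (hdisj j i h).symm
  -- cover
  have hcoverA : {ω | ∃ t ∈ F, a < B t ω} ⊆ ⋃ i ∈ Finset.range (N+1), A i := by
    intro ω hω
    obtain ⟨t, htF, hta⟩ := hω
    have htl : t ∈ l := (hmem t).2 (by simp [hF', htF])
    obtain ⟨k, hk⟩ := List.get_of_mem htl
    have hEx : ∃ i, a < B (τ i) ω := ⟨k, by rw [hτlt k.2, hk]; exact hta⟩
    set i0 := Nat.find hEx with hi0
    have hspec : a < B (τ i0) ω := Nat.find_spec hEx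
    have hle : i0 ≤ (k : ℕ) := Nat.find_le (by rw [hτlt k.2, hk]; exact hta)
    have hi0N : i0 < N + 1 := lt_of_le_of_lt (le_trans hle (le_of_lt k.2)) (Nat.lt_succ_self N)
    refine Set.mem_biUnion (Finset.mem_range.2 hi0N) ?_
    · refine ⟨hspec, ?_⟩
      simp only [Set.mem_iInter]
      intro j hj
      have := Nat.find_min hEx (Finset.mem_range.1 hj)
      exact not_lt.1 this
  -- key bound
  have key : ∀ i, i ≤ N → μ (A i) ≤ 2 * μ (A i ∩ D i) := by
    intro i hiN
    have hindep := (hBindep N τ hτmono hτnonneg).iIndep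
    have hle : ∀ j : Fin N,
        MeasurableSpace.comap (fun ω => B (τ (↑j + 1)) ω - B (τ ↑j) ω) inferInstance
          ≤ ‹MeasurableSpace Ω› :=
      fun j => measurable_iff_comap_le.mp ((hBmeas _).sub (hBmeas _))
    have hST : Disjoint {j : Fin N | (j:ℕ) < i} {j : Fin N | i ≤ (j:ℕ)} := by
      rw [Set.disjoint_left]
      intro j h1 h2
      simp only [Set.mem_setOf_eq] at h1 h2
      omega
    have hIndep := indep_iSup_of_disjoint hle hindep hST
    set M₁ := ⨆ j ∈ {j : Fin N | (j:ℕ) < i},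
      MeasurableSpace.comap (fun ω => B (τ (↑j + 1)) ω - B (τ ↑j) ω) inferInstance with hM₁
    set M₂ := ⨆ j ∈ {j : Fin N | i ≤ (j:ℕ)},
      MeasurableSpace.comap (fun ω => B (τ (↑j + 1)) ω - B (τ ↑j) ω) inferInstance with hM₂
    have hX₁ : ∀ j : ℕ, j < i → ∀ (hjN : j < N), Measurable[M₁] (X j) := by
      intro j hji hjN
      have h1 : Measurable[MeasurableSpace.comap (X j) inferInstance] (X j) :=
        measurable_iff_comap_le.mpr le_rfl
      refine h1.mono ?_ le_rfl
      have := le_iSup₂ (f := fun (j : Fin N) (_ : (j:ℕ) < i) =>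
        MeasurableSpace.comap (fun ω => B (τ (↑j + 1)) ω - B (τ ↑j) ω) inferInstance)
        ⟨j, hjN⟩ hji
      exact this
    have hX₂ : ∀ j : ℕ, i ≤ j → ∀ (hjN : j < N), Measurable[M₂] (X j) := by
      intro j hji hjN
      have h1 : Measurable[MeasurableSpace.comap (X j) inferInstance] (X j) :=
        measurable_iff_comap_le.mpr le_rfl
      refine h1.mono ?_ le_rfl
      have := le_iSup₂ (f := fun (j : Fin N) (_ : i ≤ (j:ℕ)) =>
        MeasurableSpace.comap (fun ω => B (τ (↑j + 1)) ω - B (τ ↑j) ω) inferInstance)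
        ⟨j, hjN⟩ hji
      exact this
    have hBk₁ : ∀ k, k ≤ i → Measurable[M₁] (fun ω => B (τ k) ω) := by
      intro k hk
      have heq : (fun ω => B (τ k) ω) = fun ω => ∑ j ∈ Finset.range k, X j ω :=
        funext fun ω => hsum k ω
      rw [heq]
      exact Finset.measurable_sum _ fun j hj =>
        hX₁ j (lt_of_lt_of_le (Finset.mem_range.1 hj) hk)
          (lt_of_lt_of_le (Finset.mem_range.1 hj) (le_trans hk hiN))
    have hAmeas₁ : MeasurableSet[M₁] (A i) := by
      refine MeasurableSet.inter ?_ ?_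
      · exact (hBk₁ i le_rfl) measurableSet_Ioi
      · exact Finset.measurableSet_biInter _ fun j hj =>
          (hBk₁ j (le_of_lt (Finset.mem_range.1 hj))) measurableSet_Iic
    have hDmeas₂ : MeasurableSet[M₂] (D i) := by
      have heq : (fun ω => B (τ N) ω - B (τ i) ω) = fun ω => ∑ j ∈ Finset.Ico i N, X j ω := by
        funext ω
        rw [Finset.sum_Ico_eq_sub _ hiN, ← hsum N ω, ← hsum i ω]
      have hDi : D i = (fun ω => ∑ j ∈ Finset.Ico i N, X j ω) ⁻¹' Ici 0 := by
        simp only [hD]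
        rw [heq]
      rw [hDi]
      refine Finset.measurable_sum _ (fun j hj => ?_) measurableSet_Ici
      exact hX₂ j (Finset.mem_Ico.1 hj).1 (Finset.mem_Ico.1 hj).2
    have hprod : μ (A i ∩ D i) = μ (A i) * μ (D i) :=
      (Indep_iff _ _ _).1 hIndep _ _ hAmeas₁ hDmeas₂
    have hhalf : (1:ℝ≥0∞) ≤ 2 * μ (D i) := by
      have hmap := hBgauss (τ i) (τ N) (hτnonneg i) (hτmono hiN)
      have hDval : μ (D i) = gaussianReal 0 (Real.toNNReal (τ N - τ i)) {x | 0 ≤ x} := by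
        rw [show ({x : ℝ | 0 ≤ x}) = Ici 0 from rfl, ← hmap,
          Measure.map_apply (f := fun ω => B (τ N) ω - B (τ i) ω) ((hBmeas _).sub (hBmeas _))
            measurableSet_Ici]
      rw [hDval]
      exact gauss_half _
    calc μ (A i) = μ (A i) * 1 := (mul_one _).symm
      _ ≤ μ (A i) * (2 * μ (D i)) := mul_le_mul_right hhalf _
      _ = 2 * (μ (A i) * μ (D i)) := by ring
      _ = 2 * μ (A i ∩ D i) := by rw [hprod]
  -- conclude
  have hsub : (⋃ i ∈ Finset.range (N+1), A i ∩ D i) ⊆ {ω | a ≤ B S ω} := by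
    intro ω hω
    simp only [Set.mem_iUnion] at hω
    obtain ⟨i, hi, hωA, hωD⟩ := hω
    have h1 : a < B (τ i) ω := hωA.1
    have h2 : (0:ℝ) ≤ B (τ N) ω - B (τ i) ω := hωD
    have : a ≤ B (τ N) ω := by linarith
    rwa [hτN] at this
  calc μ {ω | ∃ t ∈ F, a < B t ω}
      ≤ μ (⋃ i ∈ Finset.range (N+1), A i) := measure_mono hcoverA
    _ ≤ ∑ i ∈ Finset.range (N+1), μ (A i) := measure_biUnion_finset_le _ _
    _ ≤ ∑ i ∈ Finset.range (N+1), 2 * μ (A i ∩ D i) :=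
        Finset.sum_le_sum fun i hi => key i (Nat.lt_succ_iff.1 (Finset.mem_range.1 hi))
    _ = 2 * ∑ i ∈ Finset.range (N+1), μ (A i ∩ D i) := (Finset.mul_sum _ _ _).symm
    _ = 2 * μ (⋃ i ∈ Finset.range (N+1), A i ∩ D i) := by
        rw [measure_biUnion_finset
          (hdisj'.mono_on fun i _ => Set.inter_subset_left)
          fun i _ => (hAmeas i).inter (hDmeas i)]
    _ ≤ 2 * μ {ω | a ≤ B S ω} := mul_le_mul_right (measure_mono hsub) 2

lemma bm_maximal {Ω : Type*} [MeasurableSpace Ω] (μ : Measure Ω) [IsProbabilityMeasure μ]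
    (B : ℝ → Ω → ℝ)
    (hB0 : ∀ ω, B 0 ω = 0)
    (hBmeas : ∀ t, Measurable (B t))
    (hBcont : ∀ ω, Continuous (fun t => B t ω))
    (hBgauss : ∀ s t : ℝ, 0 ≤ s → s ≤ t →
      Measure.map (fun ω => B t ω - B s ω) μ = gaussianReal 0 (Real.toNNReal (t - s)))
    (hBindep : ∀ (n : ℕ) (τ : ℕ → ℝ), Monotone τ → (∀ i, 0 ≤ τ i) →
      iIndepFun
        (fun i : Fin n => fun ω => B (τ (i + 1)) ω - B (τ i) ω) μ)
    (S : ℝ) (hS : 0 ≤ S) {a : ℝ} (ha : 0 < a) :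
    μ {ω | ∃ t ∈ Icc (0:ℝ) S, a < B t ω} ≤ 2 * μ {ω | a ≤ B S ω} := by
  classical
  obtain ⟨e, he⟩ := exists_surjective_nat ℚ
  set G : ℕ → Set Ω := fun n =>
    {ω | ∃ j ∈ Finset.range n, ((e j : ℝ) ∈ Icc (0:ℝ) S ∧ a < B (e j) ω)} with hG
  have hGmono : Monotone G := by
    intro m n hmn ω hω
    obtain ⟨j, hj, h⟩ := hω
    exact ⟨j, Finset.mem_range.2 (lt_of_lt_of_le (Finset.mem_range.1 hj) hmn), h⟩
  have hcover : {ω | ∃ t ∈ Icc (0:ℝ) S, a < B t ω} ⊆ ⋃ n, G n := by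
    intro ω hω
    obtain ⟨t, ht, hta⟩ := hω
    have hU : IsOpen {s : ℝ | a < B s ω} := isOpen_lt continuous_const (hBcont ω)
    obtain ⟨δ, hδ, hball⟩ := Metric.isOpen_iff.1 hU t hta
    have hq : ∃ q : ℚ, (q:ℝ) ∈ Icc (0:ℝ) S ∧ (q:ℝ) ∈ Metric.ball t δ := by
      rcases eq_or_lt_of_le hS with hS0 | hS0
      · refine ⟨0, ?_, ?_⟩
        · simp [← hS0]
        · have ht0 : t = 0 := le_antisymm (by rw [← hS0] at ht; exact ht.2) ht.1
          simp [ht0, Metric.mem_ball, hδ]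
      · have hlo : max 0 (t - δ) < min S (t + δ) := by
          rcases ht with ⟨ht1, ht2⟩
          apply max_lt
          · exact lt_min hS0 (by linarith)
          · exact lt_min (by linarith) (by linarith)
        obtain ⟨q, hq1, hq2⟩ := exists_rat_btwn hlo
        refine ⟨q, ⟨?_, ?_⟩, ?_⟩
        · exact le_of_lt (lt_of_le_of_lt (le_max_left _ _) hq1)
        · exact le_of_lt (lt_of_lt_of_le hq2 (min_le_left _ _))
        · rw [Metric.mem_ball, Real.dist_eq, abs_lt]
          constructor
          · have := lt_of_le_of_lt (le_max_right _ _) hq1; linarith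
          · have := lt_of_lt_of_le hq2 (min_le_right _ _); linarith
    obtain ⟨q, hqI, hqball⟩ := hq
    obtain ⟨j, rfl⟩ := he q
    refine Set.mem_iUnion.2 ⟨j+1, j, Finset.mem_range.2 (Nat.lt_succ_self j), hqI, ?_⟩
    exact hball hqball
  have hGle : ∀ n, μ (G n) ≤ 2 * μ {ω | a ≤ B S ω} := by
    intro n
    set F : Finset ℝ :=
      ((Finset.range n).image (fun j => ((e j : ℝ)))).filter (fun t => t ∈ Icc (0:ℝ) S) with hF
    have hGF : G n = {ω | ∃ t ∈ F, a < B t ω} := by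
      ext ω
      simp only [hG, hF, Set.mem_setOf_eq, Finset.mem_filter, Finset.mem_image]
      constructor
      · rintro ⟨j, hj, hI, hB⟩
        exact ⟨(e j : ℝ), ⟨⟨j, hj, rfl⟩, hI⟩, hB⟩
      · rintro ⟨t, ⟨⟨j, hj, rfl⟩, hI⟩, hB⟩
        exact ⟨j, hj, hI, hB⟩
    rw [hGF]
    exact levy_finset μ B hB0 hBmeas hBgauss hBindep S hS F
      (fun t ht => (Finset.mem_filter.1 ht).2) ha
  calc μ {ω | ∃ t ∈ Icc (0:ℝ) S, a < B t ω} ≤ μ (⋃ n, G n) := measure_mono hcover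
    _ = ⨆ n, μ (G n) := hGmono.measure_iUnion
    _ ≤ 2 * μ {ω | a ≤ B S ω} := iSup_le hGle

/-- For a standard Brownian motion `B`, `c > 0`, and `h_T(t) = max{(ln T)^5, t^{3/4}}`,
the probability that `B` exceeds `c·h_T` somewhere on `[0,T]` is bounded, up to a
constant, by `e^{-(ln T)²/4}` as `T → ∞`. -/
theorem stmt10 {Ω : Type*} [MeasurableSpace Ω] (μ : Measure Ω) [IsProbabilityMeasure μ]
    (B : ℝ → Ω → ℝ)
    (hB0 : ∀ ω, B 0 ω = 0)
    (hBmeas : ∀ t, Measurable (B t))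
    (hBcont : ∀ ω, Continuous (fun t => B t ω))
    (hBgauss : ∀ s t : ℝ, 0 ≤ s → s ≤ t →
      Measure.map (fun ω => B t ω - B s ω) μ = gaussianReal 0 (Real.toNNReal (t - s)))
    (hBindep : ∀ (n : ℕ) (τ : ℕ → ℝ), Monotone τ → (∀ i, 0 ≤ τ i) →
      iIndepFun
        (fun i : Fin n => fun ω => B (τ (i + 1)) ω - B (τ i) ω) μ)
    (c : ℝ) (hc : 0 < c) :
    ∃ C > (0:ℝ), ∀ᶠ T : ℝ in atTop,
      μ {ω | ∃ t ∈ Icc (0:ℝ) T,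
            c * max ((Real.log T) ^ 5) (t ^ ((3:ℝ)/4)) < B t ω}
        ≤ ENNReal.ofReal (C * Real.exp (-(Real.log T) ^ 2 / 4)) := by
  refine ⟨1, one_pos, ?_⟩
  have hlog := Real.tendsto_log_atTop
  filter_upwards [eventually_ge_atTop (2:ℝ),
    hlog.eventually_ge_atTop (4:ℝ),
    hlog.eventually_ge_atTop (2/c),
    hlog.eventually_ge_atTop (6/c^2)] with T hT2 hL4 hLc hLc2
  set L := Real.log T with hLdef
  have hTpos : (0:ℝ) < T := lt_of_lt_of_le two_pos hT2
  have hL0 : (0:ℝ) < L := lt_of_lt_of_le (by norm_num) hL4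
  have hcL : 2 ≤ c * L := by
    rw [div_le_iff₀ hc] at hLc
    linarith [hLc]
  have hcL2 : 6 ≤ c^2 * L := by
    rw [div_le_iff₀ (by positivity)] at hLc2
    linarith [hLc2]
  obtain ⟨n, hn⟩ : ∃ n : ℕ, n = Nat.floor T + 1 := ⟨_, rfl⟩
  obtain ⟨aa, haa⟩ : ∃ aa : ℕ → ℝ, aa = fun k : ℕ => c * max (L^5) ((k:ℝ) ^ ((3:ℝ)/4)) :=
    ⟨_, rfl⟩
  have haapos : ∀ k, 0 < aa k := by
    intro k
    rw [haa]
    exact mul_pos hc (lt_of_lt_of_le (pow_pos hL0 5) (le_max_left _ _))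
  -- cover by unit blocks
  have hcover : {ω | ∃ t ∈ Icc (0:ℝ) T, c * max (L^5) (t ^ ((3:ℝ)/4)) < B t ω}
      ⊆ ⋃ k ∈ Finset.range n, {ω | ∃ t ∈ Icc (0:ℝ) ((k:ℝ)+1), aa k < B t ω} := by
    intro ω hω
    obtain ⟨t, ht, hta⟩ := hω
    have hkn : Nat.floor t < n := by
      rw [hn]; exact Nat.lt_succ_of_le (Nat.floor_le_floor ht.2)
    refine Set.mem_biUnion (Finset.mem_range.2 hkn) ?_
    refine ⟨t, ⟨ht.1, (Nat.lt_floor_add_one t).le⟩, ?_⟩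
    refine lt_of_le_of_lt ?_ hta
    rw [haa]
    apply mul_le_mul_of_nonneg_left _ hc.le
    apply max_le_max le_rfl
    exact Real.rpow_le_rpow (Nat.cast_nonneg _) (Nat.floor_le ht.1) (by norm_num)
  -- per-block bound
  have hblock : ∀ k : ℕ, μ {ω | ∃ t ∈ Icc (0:ℝ) ((k:ℝ)+1), aa k < B t ω}
      ≤ 2 * ENNReal.ofReal (Real.exp (-(aa k)^2 / (2*((k:ℝ)+1)))) := by
    intro k
    refine le_trans (bm_maximal μ B hB0 hBmeas hBcont hBgauss hBindep ((k:ℝ)+1)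
      (by positivity) (haapos k)) (mul_le_mul_right ?_ 2)
    have hmap := hBgauss 0 ((k:ℝ)+1) le_rfl (by positivity)
    have hfun : (fun ω => B ((k:ℝ)+1) ω - B 0 ω) = fun ω => B ((k:ℝ)+1) ω := by
      funext ω; rw [hB0, sub_zero]
    rw [hfun] at hmap
    have hset : {ω | aa k ≤ B ((k:ℝ)+1) ω} = (fun ω => B ((k:ℝ)+1) ω) ⁻¹' Ici (aa k) := rfl
    rw [hset, ← Measure.map_apply (hBmeas _) measurableSet_Ici, hmap]
    refine le_trans (gauss_tail _ (haapos k).le) ?_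
    apply ENNReal.ofReal_le_ofReal
    apply Real.exp_le_exp.2
    have hco : ((Real.toNNReal ((k:ℝ)+1-0)) : ℝ) = (k:ℝ)+1 := by
      rw [sub_zero, Real.coe_toNNReal _ (by positivity)]
    rw [hco]
  -- exponent bound
  have hexp : ∀ k : ℕ, (k:ℝ) ≤ T →
      Real.exp (-(aa k)^2 / (2*((k:ℝ)+1))) ≤ Real.exp (-L^2) := by
    intro k hkT
    apply Real.exp_le_exp.2
    have hd : (0:ℝ) < 2*((k:ℝ)+1) := by positivity
    rw [neg_div, neg_le_neg_iff, le_div_iff₀ hd]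
    -- L^2 * (2*(k+1)) ≤ (aa k)^2
    rcases le_or_gt ((k:ℝ)+1) (L^6) with hcase | hcase
    · have h1 : c * L^5 ≤ aa k := by
        rw [haa]; exact mul_le_mul_of_nonneg_left (le_max_left _ _) hc.le
      have h2 : (c*L^5)^2 ≤ (aa k)^2 := pow_le_pow_left₀ (by positivity) h1 2
      have e1 : L^2 * (2*((k:ℝ)+1)) ≤ L^2 * (2*L^6) :=
        mul_le_mul_of_nonneg_left (by linarith) (by positivity)
      have e3 : 4 ≤ (c*L)^2 := by nlinarith [hcL]
      nlinarith [pow_pos hL0 8, h2, e1, e3]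
    · have hL6 : (2:ℝ) ≤ L^6 := by
        have h := pow_le_pow_left₀ (by norm_num : (0:ℝ) ≤ 4) hL4 6
        norm_num at h
        linarith
      have hk2 : L^6/2 ≤ (k:ℝ) := by linarith
      have hk1 : (1:ℝ) ≤ (k:ℝ) := by nlinarith [hk2, hL6]
      have hkpos : (0:ℝ) < (k:ℝ) := by linarith
      have hsqrt : Real.sqrt (k:ℝ) ^ 2 = (k:ℝ) := Real.sq_sqrt (Nat.cast_nonneg k)
      have h32 : ((k:ℝ) ^ ((3:ℝ)/4))^2 = (k:ℝ) * Real.sqrt (k:ℝ) := by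
        rw [← Real.rpow_natCast ((k:ℝ) ^ ((3:ℝ)/4)) 2, ← Real.rpow_mul (Nat.cast_nonneg k)]
        rw [show (3:ℝ)/4 * (2:ℕ) = 1 + 1/2 by push_cast; ring]
        rw [Real.rpow_add hkpos, Real.rpow_one, ← Real.sqrt_eq_rpow]
      have h1 : c * (k:ℝ) ^ ((3:ℝ)/4) ≤ aa k := by
        rw [haa]; exact mul_le_mul_of_nonneg_left (le_max_right _ _) hc.le
      have h2 : (c * (k:ℝ) ^ ((3:ℝ)/4))^2 ≤ (aa k)^2 :=
        pow_le_pow_left₀ (by positivity) h1 2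
      have h3 : (c * (k:ℝ) ^ ((3:ℝ)/4))^2 = (k:ℝ) * (c^2 * Real.sqrt (k:ℝ)) := by
        rw [mul_pow, h32]; ring
      -- c^2 * sqrt k ≥ 4 L^2
      have h5 : (4*L^2)^2 ≤ (c^2*Real.sqrt (k:ℝ))^2 := by
        have hA : (c^2*Real.sqrt (k:ℝ))^2 = c^4 * (k:ℝ) := by
          rw [mul_pow, hsqrt]; ring
        rw [hA]
        have h6 : 36 ≤ c^4*L^2 := by nlinarith [hcL2]
        have h9 : 36 * L^4 ≤ (c^4*L^2) * L^4 :=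
          mul_le_mul_of_nonneg_right h6 (by positivity)
        have h10 : (c^4*L^2)*L^4 = c^4*L^6 := by ring
        have h7 : c^4 * (L^6/2) ≤ c^4 * (k:ℝ) :=
          mul_le_mul_of_nonneg_left hk2 (by positivity)
        have hB : (4*L^2)^2 = 16*L^4 := by ring
        have hC : c^4 * (L^6/2) = (c^4*L^6)/2 := by ring
        rw [hB]
        have hL4nn : (0:ℝ) ≤ L^4 := by positivity
        have h9' : 36*L^4 ≤ c^4*L^6 := le_trans h9 (le_of_eq h10)
        linarith [h9', h7]
      have h4 : 4*L^2 ≤ c^2*Real.sqrt (k:ℝ) :=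
        (pow_le_pow_iff_left₀ (by positivity) (by positivity) two_ne_zero).1 h5
      have h8 : (k:ℝ) * (4*L^2) ≤ (k:ℝ) * (c^2*Real.sqrt (k:ℝ)) :=
        mul_le_mul_of_nonneg_left h4 hkpos.le
      have h11 : L^2*(2*((k:ℝ)+1)) ≤ (k:ℝ)*(4*L^2) := by
        have h13 : (2*L^2) * 1 ≤ (2*L^2) * (k:ℝ) :=
          mul_le_mul_of_nonneg_left hk1 (by positivity)
        linarith [h13]
      have h12 : (k:ℝ)*(c^2*Real.sqrt (k:ℝ)) ≤ (aa k)^2 := by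
        rw [← h3]; exact h2
      linarith [h11, h8, h12]
  -- assemble
  have hkT : ∀ k ∈ Finset.range n, (k:ℝ) ≤ T := by
    intro k hk
    rw [hn] at hk
    have : k ≤ Nat.floor T := Nat.lt_succ_iff.1 (Finset.mem_range.1 hk)
    calc (k:ℝ) ≤ (Nat.floor T : ℝ) := Nat.cast_le.2 this
      _ ≤ T := Nat.floor_le hTpos.le
  calc μ {ω | ∃ t ∈ Icc (0:ℝ) T, c * max (L^5) (t ^ ((3:ℝ)/4)) < B t ω}
      ≤ μ (⋃ k ∈ Finset.range n, {ω | ∃ t ∈ Icc (0:ℝ) ((k:ℝ)+1), aa k < B t ω}) :=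
        measure_mono hcover
    _ ≤ ∑ k ∈ Finset.range n, μ {ω | ∃ t ∈ Icc (0:ℝ) ((k:ℝ)+1), aa k < B t ω} :=
        measure_biUnion_finset_le _ _
    _ ≤ ∑ _k ∈ Finset.range n, 2 * ENNReal.ofReal (Real.exp (-L^2)) := by
        refine Finset.sum_le_sum fun k hk => le_trans (hblock k) ?_
        exact mul_le_mul_right (ENNReal.ofReal_le_ofReal (hexp k (hkT k hk))) 2
    _ = (n : ℝ≥0∞) * (2 * ENNReal.ofReal (Real.exp (-L^2))) := by
        rw [Finset.sum_const, Finset.card_range, nsmul_eq_mul]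
    _ ≤ ENNReal.ofReal (1 * Real.exp (-L^2/4)) := by
        have heq : (n : ℝ≥0∞) * (2 * ENNReal.ofReal (Real.exp (-L^2)))
            = ENNReal.ofReal ((n:ℝ) * (2 * Real.exp (-L^2))) := by
          rw [ENNReal.ofReal_mul (by positivity), ENNReal.ofReal_mul (by norm_num),
            ENNReal.ofReal_natCast, ENNReal.ofReal_ofNat]
        rw [heq]
        apply ENNReal.ofReal_le_ofReal
        have hnT : (n:ℝ) ≤ T + 1 := by
          subst hn
          push_cast
          have := Nat.floor_le hTpos.le
          linarith
        have hTlog : Real.exp L = T := Real.exp_log hTpos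
        have h3L : Real.exp (3*L) = T^3 := by
          rw [show (3:ℝ)*L = ((3:ℕ):ℝ)*L by norm_num, Real.exp_nat_mul, hTlog]
        have hkey : 2*(T+1) ≤ Real.exp (3*L^2/4) := by
          have h1 : 3*L ≤ 3*L^2/4 := by nlinarith [hL4]
          have h2 := Real.exp_le_exp.2 h1
          rw [h3L] at h2
          have e1 : (2:ℝ)*T^2 ≤ T*T^2 := mul_le_mul_of_nonneg_right hT2 (by positivity)
          have e2 : (2:ℝ)*T ≤ T*T := mul_le_mul_of_nonneg_right hT2 (by linarith)
          nlinarith [h2, e1, e2, hT2]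
        have hE1 : (0:ℝ) < Real.exp (-L^2/4) := Real.exp_pos _
        have hE2 : (0:ℝ) < Real.exp (3*L^2/4) := Real.exp_pos _
        have hsplit : Real.exp (-L^2) = Real.exp (-L^2/4) * (Real.exp (3*L^2/4))⁻¹ := by
          rw [← Real.exp_neg, ← Real.exp_add]
          ring_nf
        rw [hsplit]
        calc (n:ℝ) * (2 * (Real.exp (-L^2/4) * (Real.exp (3*L^2/4))⁻¹))
            = (2*(n:ℝ)) * Real.exp (-L^2/4) / Real.exp (3*L^2/4) := by ring
          _ ≤ Real.exp (3*L^2/4) * Real.exp (-L^2/4) / Real.exp (3*L^2/4) := by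
              gcongr
              linarith [hkey, hnT]
          _ = 1 * Real.exp (-L^2/4) := by field_simp
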